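/- Any noisy gate computing y = g(u_1,...,u_d) ⊕ z_g with d ≤ D and Pr(z_g = 1) = ε can be stochastically simulated by a gate of the form ỹ = g(u_1 ⊕ w_1, ..., u_d ⊕ w_d) ⊕ z̃_g where w_1,...,w_d are i.i.d. Bernoulli(ε/D) wire-noise variables independent of z̃_g, and Pr(z̃_g = 1) = ε' for some ε' ∈ [0, ε]; that is, the output distributions coincide. -/

import Mathlib

/-- Noisy-gate / noisy-wire equivalence: a gate `y = g(u) ⊕ z_g` with
`Pr(z_g = 1) = ε` is stochastically simulated by
`ỹ = g(u ⊕ w) ⊕ z̃_g` where the wire noises `wᵢ` are i.i.d. Bernoulli(ε/D)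
independent of `z̃_g`, and `Pr(z̃_g = 1) = ε'` for some `ε' ∈ [0, ε]`:
the output distributions coincide for every input assignment `u`. -/
theorem noisy_gate_wire_simulation (D d : ℕ) (hd : 1 ≤ d) (hdD : d ≤ D) (hD : 3 < D)
    (ε : ℝ) (hε0 : 0 ≤ ε) (hε : ε < 1 / 2)
    (g : (Fin d → Bool) → Bool) (u : Fin d → Bool) :
    ∃ ε' ∈ Set.Icc (0 : ℝ) ε, ∀ b : Bool,
      (∑ w : Fin d → Bool,
          (∏ i, (if w i then ε / (D : ℝ) else 1 - ε / (D : ℝ)))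
            * (if g (fun i => xor (u i) (w i)) = b then 1 - ε' else ε'))
        = (if g u = b then 1 - ε else ε) := by
  have hD4 : (4:ℝ) ≤ (D:ℝ) := by exact_mod_cast hD
  have hDpos : (0:ℝ) < D := by linarith
  set δ : ℝ := ε / D with hδ
  have hδ0 : 0 ≤ δ := div_nonneg hε0 hDpos.le
  have hδε : δ ≤ ε := by
    rw [hδ, div_le_iff₀ hDpos]; nlinarith
  have hδ1 : δ < 1 := by linarith
  set P : (Fin d → Bool) → ℝ := fun w => ∏ i, (if w i then δ else 1 - δ) with hP
  have hPnn : ∀ w, 0 ≤ P w := by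
    intro w
    apply Finset.prod_nonneg
    intro i _
    by_cases h : w i <;> simp [h] <;> linarith
  have hPsum : ∑ w : Fin d → Bool, P w = 1 := by
    have h := Finset.prod_univ_sum (fun _ : Fin d => (Finset.univ : Finset Bool))
      (fun _ b => if b = true then δ else 1 - δ)
    rw [Fintype.piFinset_univ] at h
    show ∑ w : Fin d → Bool, ∏ i, (if w i = true then δ else 1 - δ) = 1
    rw [← h]
    simp
  set G : (Fin d → Bool) → Bool := fun w => g (fun i => xor (u i) (w i)) with hG
  set p : ℝ := ∑ w : Fin d → Bool, (if G w = g u then P w else 0) with hp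
  -- lower bound on p
  have hple : 1 - ε ≤ p := by
    have h0 : G (fun _ => false) = g u := by
      rw [hG]; simp
    have hterm : (1 - δ)^d ≤ p := by
      have := Finset.single_le_sum
        (f := fun w : Fin d → Bool => if G w = g u then P w else 0)
        (fun w _ => by by_cases h : G w = g u <;> simp [h, hPnn w])
        (Finset.mem_univ (fun _ : Fin d => false))
      simpa [h0, hP] using this
    have hbern : 1 - (d:ℝ) * δ ≤ (1 - δ)^d := by
      have := one_add_mul_le_pow (a := -δ) (by linarith) d
      simpa [mul_comm, ← sub_eq_add_neg] using this
    have hdδ : (d:ℝ) * δ ≤ ε := by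
      have hdD' : (d:ℝ) ≤ D := by exact_mod_cast hdD
      have h1 : (d:ℝ) * δ ≤ (D:ℝ) * δ := mul_le_mul_of_nonneg_right hdD' hδ0
      have h2 : (D:ℝ) * δ = ε := by rw [hδ]; field_simp
      linarith
    linarith
  have hpge : p ≤ 1 := by
    rw [hp, ← hPsum]
    apply Finset.sum_le_sum
    intro w _
    by_cases h : G w = g u <;> simp [h, hPnn w]
  have h2p : 0 < 2 * p - 1 := by linarith
  refine ⟨(p - (1 - ε)) / (2 * p - 1), ⟨div_nonneg (by linarith) h2p.le, ?_⟩, ?_⟩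
  · rw [div_le_iff₀ h2p]; nlinarith
  · set ε' : ℝ := (p - (1 - ε)) / (2 * p - 1) with hε'
    have hkey : ε' * (2 * p - 1) = p - (1 - ε) := div_mul_cancel₀ _ h2p.ne'
    intro b
    have hdecomp :
        (∑ w : Fin d → Bool, P w * (if G w = b then 1 - ε' else ε'))
          = ε' + (∑ w : Fin d → Bool, (if G w = b then P w else 0)) * (1 - 2*ε') := by
      have hterm : ∀ w : Fin d → Bool, P w * (if G w = b then 1 - ε' else ε')
          = P w * ε' + (if G w = b then P w else 0) * (1 - 2*ε') := by
        intro w; by_cases h : G w = b <;> simp [h] <;> ring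
      rw [Finset.sum_congr rfl (fun w _ => hterm w), Finset.sum_add_distrib,
        ← Finset.sum_mul, ← Finset.sum_mul, hPsum, one_mul]
    have hgoal : (∑ w : Fin d → Bool,
          (∏ i, (if w i then ε / (D : ℝ) else 1 - ε / (D : ℝ)))
            * (if g (fun i => xor (u i) (w i)) = b then 1 - ε' else ε'))
        = ∑ w : Fin d → Bool, P w * (if G w = b then 1 - ε' else ε') := rfl
    rw [hgoal, hdecomp]
    by_cases hb : g u = b
    · have hSb : (∑ w : Fin d → Bool, (if G w = b then P w else 0)) = p := by
        rw [hp, hb]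
      rw [hSb, if_pos hb]
      linear_combination -hkey
    · have hbnot : b = !(g u) := by
        revert hb; cases g u <;> cases b <;> decide
      have hnot : ∀ w, (G w = b) ↔ ¬ (G w = g u) := by
        intro w
        rw [hbnot]
        cases hgw : G w <;> cases hgu : g u <;> decide
      have hsplit' : (∑ w : Fin d → Bool, (if G w = g u then P w else 0))
          + (∑ w : Fin d → Bool, (if G w = g u then 0 else P w)) = 1 := by
        rw [← Finset.sum_add_distrib, ← hPsum]
        apply Finset.sum_congr rfl
        intro w _
        by_cases h : G w = g u <;> simp [h]
      have hSb : (∑ w : Fin d → Bool, (if G w = b then P w else 0)) = 1 - p := by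
        have heq : (∑ w : Fin d → Bool, (if G w = b then P w else 0))
            = ∑ w : Fin d → Bool, (if G w = g u then 0 else P w) := by
          apply Finset.sum_congr rfl
          intro w _
          by_cases h : G w = g u
          · rw [if_neg (fun hc => (hnot w).mp hc h), if_pos h]
          · rw [if_pos ((hnot w).mpr h), if_neg h]
        rw [heq]
        linarith [hsplit', hp.le, hp.ge]
      rw [hSb, if_neg hb]
      linear_combination hkey
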